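/- Let X be a Banach space, C ⊆ X a convex set containing the origin, and 0 < r < R. There exists a mapping Φ : C → C such that Φ(x) = 0 for all x ∈ C ∩ B̄(0, r), Φ(x) = x for all x ∈ C ∖ B(0, R), Lip Φ ≤ 1 + r/(R − r), and ‖Φ(x) − x‖ ≤ r for all x ∈ C. -/

import Mathlib

open Metric Set

/-- Radial retraction lemma: for a convex set `C` containing the origin and `0 < r < R`,
there is `Φ : C → C` vanishing on `C ∩ B̄(0, r)`, equal to the identity on `C ∖ B(0, R)`,
Lipschitz with constant at most `1 + r/(R − r)` and satisfying `‖Φ(x) − x‖ ≤ r` on `C`. -/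
theorem radial_retraction {X : Type*} [NormedAddCommGroup X] [NormedSpace ℝ X]
    (C : Set X) (hCco : Convex ℝ C) (h0C : (0 : X) ∈ C)
    (r R : ℝ) (hr : 0 < r) (hrR : r < R) :
    ∃ Φ : X → X, (∀ x ∈ C, Φ x ∈ C) ∧
      (∀ x ∈ C ∩ Metric.closedBall (0 : X) r, Φ x = 0) ∧
      (∀ x ∈ C \ Metric.ball (0 : X) R, Φ x = x) ∧
      (∀ x ∈ C, ∀ y ∈ C, ‖Φ x - Φ y‖ ≤ (1 + r / (R - r)) * ‖x - y‖) ∧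
      (∀ x ∈ C, ‖Φ x - x‖ ≤ r) := by
  have hRr : (0:ℝ) < R - r := sub_pos.2 hrR
  have hR0 : (0:ℝ) < R := lt_trans hr hrR
  set L : ℝ := 1 + r / (R - r) with hLdef
  have hL1 : (1:ℝ) ≤ L := le_add_of_nonneg_right (by positivity)
  have hLR : L = R / (R - r) := by rw [hLdef]; field_simp; ring
  set c : ℝ → ℝ := fun t => R * max 0 (t - r) / (R - r) with hcdef
  set h : ℝ → ℝ := fun t => min t (c t) with hhdef
  have h_nonneg : ∀ t, 0 ≤ t → 0 ≤ h t := fun t ht => le_min ht (by positivity)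
  have h_le : ∀ t, h t ≤ t := fun t => min_le_left _ _
  have h_zero : ∀ t, 0 ≤ t → t ≤ r → h t = 0 := by
    intro t ht htr
    have hm : max 0 (t - r) = 0 := max_eq_left (by linarith)
    simp only [hhdef, hcdef, hm, mul_zero, zero_div]
    exact min_eq_right ht
  have h_id : ∀ t, R ≤ t → h t = t := by
    intro t ht
    have hm : max 0 (t - r) = t - r := max_eq_right (by linarith)
    have : t ≤ c t := by
      simp only [hcdef, hm]
      rw [le_div_iff₀ hRr]; nlinarith
    exact min_eq_left this
  have h_ge : ∀ t, t - r ≤ h t := by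
    intro t
    refine le_min (by linarith) ?_
    rcases le_or_gt t r with hc' | hc'
    · have hm : max 0 (t - r) = 0 := max_eq_left (by linarith)
      simp only [hcdef, hm, mul_zero, zero_div]; linarith
    · have hm : max 0 (t - r) = t - r := max_eq_right (by linarith)
      simp only [hcdef, hm]
      rw [le_div_iff₀ hRr]; nlinarith
  have c_lip : ∀ s t, s ≤ t → c t ≤ c s + L * (t - s) := by
    intro s t hst
    have hmax : max 0 (t - r) ≤ max 0 (s - r) + (t - s) := by
      rcases le_or_gt t r with hc' | hc'
      · have h0' : max 0 (t - r) = 0 := max_eq_left (by linarith)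
        rw [h0']; linarith [le_max_left (0:ℝ) (s - r)]
      · have h1 : max 0 (t - r) = t - r := max_eq_right (by linarith)
        rw [h1]
        rcases le_or_gt s r with hc2 | hc2
        · have : max 0 (s - r) = 0 := max_eq_left (by linarith)
          rw [this]; linarith
        · have : max 0 (s - r) = s - r := max_eq_right (by linarith)
          rw [this]; linarith
    have key : R * max 0 (t - r) / (R - r) ≤ (R * max 0 (s - r) + R * (t - s)) / (R - r) := by
      apply div_le_div_of_nonneg_right ?_ hRr.le <;> nlinarith
    have h2 : (R * max 0 (s - r) + R * (t - s)) / (R - r)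
        = R * max 0 (s - r) / (R - r) + L * (t - s) := by
      rw [add_div, hLR]; ring
    simpa only [hcdef, h2] using key
  have h_lip : ∀ s t, s ≤ t → h t - h s ≤ L * (t - s) := by
    intro s t hst
    have h1 : h t ≤ s + L * (t - s) := by
      have := h_le t; nlinarith
    have h2 : h t ≤ c s + L * (t - s) := (min_le_right _ _).trans (c_lip s t hst)
    have : h t ≤ min s (c s) + L * (t - s) := by
      rcases le_total s (c s) with hc' | hc'
      · rw [min_eq_left hc']; exact h1
      · rw [min_eq_right hc']; exact h2
    simp only [hhdef] at *; linarith
  have ratio : ∀ s t, 0 ≤ s → s ≤ t → h s * t ≤ h t * s := by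
    intro s t hs hst
    have ht : 0 ≤ t := hs.trans hst
    have e1 : h s * t ≤ t * s := by
      have := mul_le_mul_of_nonneg_right (h_le s) ht; linarith [this]
    have e2 : h s * t ≤ c t * s := by
      have l1 : h s * t ≤ c s * t := mul_le_mul_of_nonneg_right (min_le_right _ _) ht
      have l2 : c s * t ≤ c t * s := by
        have : max 0 (s - r) * t ≤ max 0 (t - r) * s := by
          rcases le_or_gt s r with hc' | hc'
          · have : max 0 (s - r) = 0 := max_eq_left (by linarith)
            rw [this, zero_mul]
            positivity
          · have hm1 : max 0 (s - r) = s - r := max_eq_right (by linarith)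
            have hm2 : max 0 (t - r) = t - r := max_eq_right (by linarith)
            rw [hm1, hm2]; nlinarith
        simp only [hcdef]
        rw [div_mul_eq_mul_div, div_mul_eq_mul_div]
        apply div_le_div_of_nonneg_right ?_ hRr.le
        nlinarith [mul_le_mul_of_nonneg_left this hR0.le]
      exact l1.trans l2
    have : h t * s = min (t * s) (c t * s) := by
      simp only [hhdef]
      exact (min_mul_of_nonneg _ _ hs)
    rw [this]
    exact le_min e1 e2
  -- the map
  set Φ : X → X := fun x => (h ‖x‖ / ‖x‖) • x with hΦdef
  have g_nonneg : ∀ x : X, 0 ≤ h ‖x‖ / ‖x‖ :=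
    fun x => div_nonneg (h_nonneg _ (norm_nonneg x)) (norm_nonneg x)
  have g_le_one : ∀ x : X, h ‖x‖ / ‖x‖ ≤ 1 :=
    fun x => div_le_one_of_le₀ (h_le _) (norm_nonneg x)
  have g_mul : ∀ x : X, (h ‖x‖ / ‖x‖) * ‖x‖ = h ‖x‖ := by
    intro x
    rcases eq_or_lt_of_le (norm_nonneg x) with h0 | h0
    · rw [← h0, mul_zero]
      have : h 0 = 0 := le_antisymm (h_le 0) (h_nonneg 0 le_rfl)
      rw [this]
    · field_simp
  have g_mono : ∀ x y : X, ‖x‖ ≤ ‖y‖ → h ‖x‖ / ‖x‖ ≤ h ‖y‖ / ‖y‖ := by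
    intro x y hxy
    rcases eq_or_lt_of_le (norm_nonneg x) with h0 | h0
    · rw [← h0]
      have : h 0 = 0 := le_antisymm (h_le 0) (h_nonneg 0 le_rfl)
      rw [this]
      simp [g_nonneg y]
    · have hy : (0:ℝ) < ‖y‖ := lt_of_lt_of_le h0 hxy
      rw [div_le_div_iff₀ h0 hy]
      exact ratio _ _ (le_of_lt h0) hxy
  have key : ∀ x y : X, ‖x‖ ≤ ‖y‖ → ‖Φ x - Φ y‖ ≤ L * ‖x - y‖ := by
    intro x y hxy
    set a := h ‖x‖ / ‖x‖ with ha
    set b := h ‖y‖ / ‖y‖ with hb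
    have hab : a ≤ b := g_mono x y hxy
    have hdecomp : Φ x - Φ y = a • (x - y) + (a - b) • y := by
      simp only [hΦdef, ← ha, ← hb, smul_sub, sub_smul]
      abel
    have hnorm : ‖Φ x - Φ y‖ ≤ a * ‖x - y‖ + (b - a) * ‖y‖ := by
      rw [hdecomp]
      refine (norm_add_le _ _).trans ?_
      rw [norm_smul, norm_smul, Real.norm_eq_abs, Real.norm_eq_abs,
        abs_of_nonneg (g_nonneg x), abs_sub_comm, abs_of_nonneg (sub_nonneg.2 hab)]
    have hdist : ‖y‖ - ‖x‖ ≤ ‖x - y‖ := by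
      rw [norm_sub_rev]; exact norm_sub_norm_le _ _
    have hbt : (b - a) * ‖y‖ ≤ (L - a) * (‖y‖ - ‖x‖) := by
      have h1 : h ‖y‖ ≤ h ‖x‖ + L * (‖y‖ - ‖x‖) := by
        have := h_lip ‖x‖ ‖y‖ hxy; linarith
      have h2 : b * ‖y‖ = h ‖y‖ := g_mul y
      have h3 : a * ‖x‖ = h ‖x‖ := g_mul x
      nlinarith
    have hLa : 0 ≤ L - a := by linarith [g_le_one x]
    have : (L - a) * (‖y‖ - ‖x‖) ≤ (L - a) * ‖x - y‖ :=
      mul_le_mul_of_nonneg_left hdist hLa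
    nlinarith [norm_nonneg (x - y), g_nonneg x]
  refine ⟨Φ, ?_, ?_, ?_, ?_, ?_⟩
  · intro x hx
    exact hCco.smul_mem_of_zero_mem h0C hx ⟨g_nonneg x, g_le_one x⟩
  · rintro x ⟨-, hx⟩
    rw [mem_closedBall, dist_zero_right] at hx
    have : h ‖x‖ = 0 := h_zero _ (norm_nonneg x) hx
    simp [hΦdef, this]
  · rintro x ⟨-, hx⟩
    rw [mem_ball, dist_zero_right, not_lt] at hx
    have hx0 : ‖x‖ ≠ 0 := ne_of_gt (lt_of_lt_of_le hR0 hx)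
    have : h ‖x‖ = ‖x‖ := h_id _ hx
    simp [hΦdef, this, div_self hx0]
  · intro x _ y _
    rcases le_total ‖x‖ ‖y‖ with hc' | hc'
    · exact key x y hc'
    · rw [norm_sub_rev, norm_sub_rev x y]
      exact key y x hc'
  · intro x _
    have hdec : Φ x - x = (h ‖x‖ / ‖x‖ - 1) • x := by
      simp only [hΦdef, sub_smul, one_smul]
    rw [hdec, norm_smul, Real.norm_eq_abs, abs_of_nonpos (by linarith [g_le_one x])]
    have := g_mul x
    have := h_ge ‖x‖
    nlinarith [norm_nonneg x]
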